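/- Let Σ^{-1} be a symmetric positive-definite K×K matrix with nonnegative entries. Then the function y(θ) = -½ (log θ)ᵀ Σ^{-1} (log θ) is concave on the interior of the unit simplex Δ ⊂ ℝ^K. -/

import Mathlib

open Finset Matrix

private lemma ctm_symm {K : ℕ} (A : Matrix (Fin K) (Fin K) ℝ) (hA : A.IsHermitian)
    (u v : Fin K → ℝ) : u ⬝ᵥ A.mulVec v = v ⬝ᵥ A.mulVec u := by
  simp only [dotProduct, mulVec, Finset.mul_sum]
  rw [Finset.sum_comm]
  refine Finset.sum_congr rfl fun i _ => Finset.sum_congr rfl fun j _ => ?_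
  have h : A i j = A j i := by
    have := congrFun (congrFun hA.eq j) i
    simpa [conjTranspose, transpose] using this
  rw [h]; ring

private lemma ctm_quad_convex {K : ℕ} (A : Matrix (Fin K) (Fin K) ℝ) (hA : A.PosSemidef)
    (u v : Fin K → ℝ) (a b : ℝ) (ha : 0 ≤ a) (hb : 0 ≤ b) (hab : a + b = 1) :
    ((a • u + b • v) ⬝ᵥ A.mulVec (a • u + b • v)) ≤
      a * (u ⬝ᵥ A.mulVec u) + b * (v ⬝ᵥ A.mulVec v) := by
  have hpsd : 0 ≤ (u - v) ⬝ᵥ A.mulVec (u - v) := by simpa using hA.dotProduct_mulVec_nonneg (u - v)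
  have hsym := ctm_symm A hA.1 u v
  have hb' : b = 1 - a := by linarith
  subst hb'
  simp only [add_dotProduct, dotProduct_add, smul_dotProduct, dotProduct_smul,
    Matrix.mulVec_add, Matrix.mulVec_smul, sub_dotProduct, dotProduct_sub,
    Matrix.mulVec_sub, smul_eq_mul] at *
  nlinarith [mul_nonneg (mul_nonneg ha hb) hpsd]

/-- For `Σ⁻¹ = A` symmetric positive definite with nonnegative entries, the function
`y(θ) = -½ (log θ)ᵀ A (log θ)` is concave on the interior of the unit simplex. -/
theorem ctm_prior_concave {K : ℕ} (A : Matrix (Fin K) (Fin K) ℝ)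
    (hA_pd : A.PosDef) (hA_nonneg : ∀ i j, 0 ≤ A i j) :
    ConcaveOn ℝ {θ : Fin K → ℝ | θ ∈ stdSimplex ℝ (Fin K) ∧ ∀ k, 0 < θ k}
      (fun θ => -(1 / 2) * ((fun i => Real.log (θ i)) ⬝ᵥ A.mulVec fun i => Real.log (θ i))) := by
  have hpos : ∀ (θ φ : Fin K → ℝ),
      θ ∈ {θ : Fin K → ℝ | θ ∈ stdSimplex ℝ (Fin K) ∧ ∀ k, 0 < θ k} →
      φ ∈ {θ : Fin K → ℝ | θ ∈ stdSimplex ℝ (Fin K) ∧ ∀ k, 0 < θ k} →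
      ∀ a b : ℝ, 0 ≤ a → 0 ≤ b → a + b = 1 → ∀ k, 0 < a * θ k + b * φ k := by
    intro θ φ hθ hφ a b ha hb hab k
    rcases eq_or_lt_of_le ha with ha' | ha'
    · have hb1 : b = 1 := by linarith
      have := hφ.2 k
      rw [← ha', hb1]; simpa using this
    · have h1 : 0 ≤ b * φ k := mul_nonneg hb (le_of_lt (hφ.2 k))
      have h2 : 0 < a * θ k := mul_pos ha' (hθ.2 k)
      linarith
  constructor
  · intro θ hθ φ hφ a b ha hb hab
    refine ⟨convex_stdSimplex ℝ (Fin K) hθ.1 hφ.1 ha hb hab, fun k => ?_⟩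
    simpa using hpos θ φ hθ hφ a b ha hb hab k
  · intro θ hθ φ hφ a b ha hb hab
    have hle1 : ∀ (ψ : Fin K → ℝ), ψ ∈ stdSimplex ℝ (Fin K) → ∀ k, ψ k ≤ 1 := by
      intro ψ hψ k
      calc ψ k ≤ ∑ i, ψ i := Finset.single_le_sum (fun i _ => hψ.1 i) (Finset.mem_univ k)
        _ = 1 := hψ.2
    set u : Fin K → ℝ := fun i => Real.log (θ i) with hu
    set v : Fin K → ℝ := fun i => Real.log (φ i) with hv
    set w : Fin K → ℝ := fun i => Real.log (a * θ i + b * φ i) with hw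
    have hu0 : ∀ k, u k ≤ 0 := fun k =>
      Real.log_nonpos (le_of_lt (hθ.2 k)) (hle1 θ hθ.1 k)
    have hv0 : ∀ k, v k ≤ 0 := fun k =>
      Real.log_nonpos (le_of_lt (hφ.2 k)) (hle1 φ hφ.1 k)
    have hw0 : ∀ k, w k ≤ 0 := by
      intro k
      refine Real.log_nonpos (le_of_lt (hpos θ φ hθ hφ a b ha hb hab k)) ?_
      have := hle1 θ hθ.1 k; have := hle1 φ hφ.1 k; nlinarith
    have hcomb : ∀ k, a * u k + b * v k ≤ w k := by
      intro k
      have := strictConcaveOn_log_Ioi.concaveOn.2 (Set.mem_Ioi.2 (hθ.2 k))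
        (Set.mem_Ioi.2 (hφ.2 k)) ha hb hab
      simpa [hu, hv, hw] using this
    have hmono : (w ⬝ᵥ A.mulVec w) ≤ ((a • u + b • v) ⬝ᵥ A.mulVec (a • u + b • v)) := by
      simp only [dotProduct, mulVec, Finset.mul_sum]
      refine Finset.sum_le_sum fun i _ => Finset.sum_le_sum fun j _ => ?_
      have hzi : a * u i + b * v i ≤ w i := hcomb i
      have hzj : a * u j + b * v j ≤ w j := hcomb j
      have hz0i : a * u i + b * v i ≤ 0 := by nlinarith [hu0 i, hv0 i]
      have hz0j : a * u j + b * v j ≤ 0 := by nlinarith [hu0 j, hv0 j]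
      have hprod : w i * w j ≤ (a * u i + b * v i) * (a * u j + b * v j) := by
        nlinarith [hw0 i, hw0 j]
      have := hA_nonneg i j
      simp only [Pi.add_apply, Pi.smul_apply, smul_eq_mul]
      nlinarith
    have hconv := ctm_quad_convex A hA_pd.posSemidef u v a b ha hb hab
    have hgoal : (w ⬝ᵥ A.mulVec w) ≤ a * (u ⬝ᵥ A.mulVec u) + b * (v ⬝ᵥ A.mulVec v) :=
      le_trans hmono hconv
    simp only [smul_eq_mul, Pi.add_apply, Pi.smul_apply]
    show a * (-(1 / 2) * (u ⬝ᵥ A.mulVec u)) + b * (-(1 / 2) * (v ⬝ᵥ A.mulVec v)) ≤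
      -(1 / 2) * (w ⬝ᵥ A.mulVec w)
    linarith
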